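/- For all nonnegative integers n, p and real x, λ, one has the identity Σ_{k=0}^{∞} Σ_{m=0}^{∞} (x+k)_{n,λ}/k! · (-1)^m/(m! C(m+k+p, p)) = Σ_{m=0}^{n} Σ_{k=0}^{m} C(n,m)/C(p+k,k) · S_{2,λ}(m,k) (x)_{n-m,λ}, where the double series on the left converges absolutely. -/

import Mathlib

open Finset

def degFall (l x : ℝ) (n : ℕ) : ℝ := ∏ i ∈ Finset.range n, (x - i * l)
def fall (x : ℝ) (n : ℕ) : ℝ := ∏ i ∈ Finset.range n, (x - i)

lemma degFall_zero (l x : ℝ) : degFall l x 0 = 1 := by simp [degFall]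
lemma degFall_succ (l x : ℝ) (n : ℕ) : degFall l x (n+1) = degFall l x n * (x - n * l) := by
  simp [degFall, Finset.prod_range_succ]

lemma fall_cast (k j : ℕ) : fall (k : ℝ) j = (k.descFactorial j : ℝ) := by
  induction j with
  | zero => simp [fall]
  | succ j ih =>
    rw [show fall (k:ℝ) (j+1) = fall (k:ℝ) j * ((k:ℝ) - j) by simp [fall, Finset.prod_range_succ],
      ih, Nat.descFactorial_succ]
    rcases le_or_gt j k with h | h
    · push_cast [h]; ring
    · rw [Nat.descFactorial_eq_zero_iff_lt.mpr h]; simp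

lemma degFall_add (l x y : ℝ) (n : ℕ) :
    degFall l (x + y) n
      = ∑ m ∈ Finset.range (n+1), (n.choose m : ℝ) * degFall l x (n-m) * degFall l y m := by
  induction n with
  | zero => simp [degFall]
  | succ n ih =>
    rw [degFall_succ, ih, Finset.sum_mul]
    have key : ∀ m ∈ Finset.range (n+1),
        (n.choose m : ℝ) * degFall l x (n-m) * degFall l y m * (x + y - n*l)
        = (n.choose m : ℝ) * degFall l x (n+1-m) * degFall l y m
          + (n.choose m : ℝ) * degFall l x (n-m) * degFall l y (m+1) := by
      intro m hm
      rw [Finset.mem_range, Nat.lt_succ_iff] at hm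
      have h1 : n + 1 - m = (n - m) + 1 := by omega
      rw [h1, degFall_succ, degFall_succ]
      have h2 : ((n - m : ℕ) : ℝ) = (n : ℝ) - m := by push_cast [hm]; ring
      rw [h2]; ring
    rw [Finset.sum_congr rfl key, Finset.sum_add_distrib]
    rw [Finset.sum_range_succ' (fun m => (((n+1).choose m : ℕ) : ℝ) * degFall l x (n+1-m) * degFall l y m) (n+1)]
    have hA : (∑ m ∈ Finset.range (n+1), (n.choose m : ℝ) * degFall l x (n+1-m) * degFall l y m)
        = (∑ m ∈ Finset.range (n+1), (n.choose (m+1) : ℝ) * degFall l x (n-m) * degFall l y (m+1))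
          + degFall l x (n+1) := by
      rw [Finset.sum_range_succ (fun m => (n.choose (m+1) : ℝ) * degFall l x (n-m) * degFall l y (m+1)) n,
        Nat.choose_succ_self]
      rw [Finset.sum_range_succ' (fun m => (n.choose m : ℝ) * degFall l x (n+1-m) * degFall l y m) n]
      simp only [Nat.cast_zero, zero_mul, add_zero, Nat.choose_zero_right, Nat.cast_one, one_mul,
        Nat.sub_zero, Nat.succ_sub_succ]
      rw [show degFall l y 0 = 1 from by simp [degFall], mul_one]
    rw [hA]
    have hB : ∀ m ∈ Finset.range (n+1),
        (((n+1).choose (m+1) : ℕ) : ℝ) * degFall l x (n+1-(m+1)) * degFall l y (m+1)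
        = (n.choose (m+1) : ℝ) * degFall l x (n-m) * degFall l y (m+1)
          + (n.choose m : ℝ) * degFall l x (n-m) * degFall l y (m+1) := by
      intro m hm
      rw [Nat.choose_succ_succ', Nat.succ_sub_succ]
      push_cast; ring
    rw [Finset.sum_congr rfl hB, Finset.sum_add_distrib]
    simp only [Nat.choose_zero_right, Nat.cast_one, one_mul, Nat.sub_zero,
      show degFall l y 0 = 1 from by simp [degFall], mul_one]
    ring

lemma choose_le_two_pow' (a b : ℕ) : a.choose b ≤ 2 ^ a := by
  rcases le_or_gt b a with h | h
  · calc a.choose b ≤ ∑ i ∈ Finset.range (a+1), a.choose i :=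
        Finset.single_le_sum (fun i _ => Nat.zero_le _) (Finset.mem_range.mpr (by omega))
      _ = 2 ^ a := Nat.sum_range_choose a
  · simp [Nat.choose_eq_zero_of_lt h]

lemma prod_range_eq_descFactorial (k n : ℕ) :
    (∏ i ∈ Finset.range n, ((k : ℝ) + i + 1)) = ((k+n).descFactorial n : ℝ) := by
  rw [Nat.descFactorial_eq_prod_range, Nat.cast_prod,
    ← Finset.prod_range_reflect (fun i => (((k+n-i : ℕ)) : ℝ)) n]
  apply Finset.prod_congr rfl
  intro i hi
  rw [Finset.mem_range] at hi
  have h : k + n - (n-1-i) = k + i + 1 := by omega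
  rw [h]; push_cast; ring

lemma summable_two_pow_div_factorial : Summable (fun k : ℕ => (2:ℝ)^k / k.factorial) :=
  Real.summable_pow_div_factorial 2

lemma summable_one_div_factorial : Summable (fun k : ℕ => (1:ℝ) / k.factorial) := by
  have := Real.summable_pow_div_factorial 1
  simpa using this

lemma summable_degFall_div_factorial (l x : ℝ) (n : ℕ) :
    Summable (fun k : ℕ => |degFall l (x + k) n| / (k.factorial : ℝ)) := by
  set B : ℝ := max (|x| + n * |l|) 1 with hB
  have hB1 : (1:ℝ) ≤ B := le_max_right _ _
  have hB0 : (0:ℝ) ≤ B := le_trans zero_le_one hB1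
  have hBx : |x| + n * |l| ≤ B := le_max_left _ _
  refine Summable.of_nonneg_of_le
    (fun k => div_nonneg (abs_nonneg _) (Nat.cast_nonneg _))
    (fun k => ?_)
    ((summable_two_pow_div_factorial.mul_left (B ^ n * n.factorial * 2 ^ n)))
  have hfk : (0:ℝ) < k.factorial := by exact_mod_cast k.factorial_pos
  have h1 : |degFall l (x + k) n| ≤ B ^ n * ((k+n).descFactorial n : ℝ) := by
    have habs : |degFall l (x + k) n| ≤ ∏ i ∈ Finset.range n, (B * ((k:ℝ) + i + 1)) := by
      rw [degFall, Finset.abs_prod]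
      apply Finset.prod_le_prod (fun i _ => abs_nonneg _)
      intro i hi
      rw [Finset.mem_range] at hi
      have hi' : (i:ℝ) ≤ n := by exact_mod_cast hi.le
      have h2 : |x + (k:ℝ) - i * l| ≤ |x| + k + i * |l| := by
        calc |x + (k:ℝ) - i * l| ≤ |x + (k:ℝ)| + |(i:ℝ) * l| := abs_sub _ _
          _ ≤ |x| + |(k:ℝ)| + (i:ℝ) * |l| := by
              rw [abs_mul, abs_of_nonneg (by positivity : (0:ℝ) ≤ (i:ℝ))]
              exact add_le_add (abs_add_le _ _) le_rfl
          _ = |x| + k + i * |l| := by rw [Nat.abs_cast]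
      have h3 : |x| + (k:ℝ) + i * |l| ≤ B * ((k:ℝ) + i + 1) := by
        have h5 : (i:ℝ) * |l| ≤ (n:ℝ) * |l| :=
          mul_le_mul_of_nonneg_right hi' (abs_nonneg _)
        nlinarith [Nat.cast_nonneg (α := ℝ) k, Nat.cast_nonneg (α := ℝ) i, abs_nonneg l]
      exact le_trans h2 h3
    calc |degFall l (x + k) n| ≤ ∏ i ∈ Finset.range n, (B * ((k:ℝ) + i + 1)) := habs
      _ = B ^ n * ∏ i ∈ Finset.range n, ((k:ℝ) + i + 1) := by
          rw [Finset.prod_mul_distrib, Finset.prod_const, Finset.card_range]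
      _ = B ^ n * ((k+n).descFactorial n : ℝ) := by rw [prod_range_eq_descFactorial]
  have hd : (k+n).descFactorial n = (k+n).choose n * n.factorial := by
    have h5 := Nat.factorial_mul_descFactorial (Nat.le_add_left n k)
    have h6 := Nat.choose_mul_factorial_mul_factorial (Nat.le_add_left n k)
    have h7 : k + n - n = k := by omega
    rw [h7] at h5 h6
    have h8 : (k+n).descFactorial n * k.factorial
        = ((k+n).choose n * n.factorial) * k.factorial := by
      rw [mul_comm] at h5; rw [h5, ← h6]
    exact Nat.eq_of_mul_eq_mul_right k.factorial_pos h8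
  have h4 : ((k+n).descFactorial n : ℝ) ≤ 2^(k+n) * n.factorial := by
    rw [hd]
    push_cast
    have := choose_le_two_pow' (k+n) n
    have h9 : ((k+n).choose n : ℝ) ≤ 2^(k+n) := by exact_mod_cast this
    exact mul_le_mul_of_nonneg_right h9 (Nat.cast_nonneg _)
  have h10 : |degFall l (x + k) n| ≤ B ^ n * n.factorial * 2 ^ n * 2 ^ k := by
    calc |degFall l (x + k) n| ≤ B ^ n * ((k+n).descFactorial n : ℝ) := h1
      _ ≤ B ^ n * (2^(k+n) * n.factorial) := by
          exact mul_le_mul_of_nonneg_left h4 (by positivity)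
      _ = B ^ n * n.factorial * 2 ^ n * 2 ^ k := by rw [pow_add]; ring
  calc |degFall l (x + k) n| / (k.factorial : ℝ)
      ≤ (B ^ n * n.factorial * 2 ^ n * 2 ^ k) / (k.factorial : ℝ) :=
        div_le_div_of_nonneg_right h10 hfk.le
    _ = B ^ n * n.factorial * 2 ^ n * (2 ^ k / (k.factorial : ℝ)) := by ring

lemma descFactorial_div_factorial_eq (j k : ℕ) :
    ((k.descFactorial j : ℕ) : ℝ) / (k.factorial : ℝ)
      = if j ≤ k then (1:ℝ) / ((k-j).factorial : ℝ) else 0 := by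
  rcases le_or_gt j k with h | h
  · rw [if_pos h]
    have h5 := Nat.factorial_mul_descFactorial h
    have hk : (0:ℝ) < k.factorial := by exact_mod_cast k.factorial_pos
    have hkj : (0:ℝ) < (k-j).factorial := by exact_mod_cast (k-j).factorial_pos
    rw [div_eq_div_iff hk.ne' hkj.ne', one_mul]
    exact_mod_cast (mul_comm ((k-j).factorial) (k.descFactorial j) ▸ h5)
  · rw [if_neg (not_le.mpr h), Nat.descFactorial_eq_zero_iff_lt.mpr h]
    simp

lemma summable_descFactorial_div_factorial (j : ℕ) :
    Summable (fun k : ℕ => ((k.descFactorial j : ℕ) : ℝ) / (k.factorial : ℝ)) := by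
  have he : (fun k : ℕ => ((k.descFactorial j : ℕ) : ℝ) / (k.factorial : ℝ))
      = fun k => if j ≤ k then (1:ℝ) / ((k-j).factorial : ℝ) else 0 := by
    funext k; exact descFactorial_div_factorial_eq j k
  rw [he]
  apply (summable_nat_add_iff j).mp
  have : (fun k : ℕ => if j ≤ k + j then (1:ℝ) / ((k+j-j).factorial : ℝ) else 0)
      = fun k : ℕ => (1:ℝ) / (k.factorial : ℝ) := by
    funext k
    rw [if_pos (Nat.le_add_left j k), Nat.add_sub_cancel]
  rw [this]
  exact summable_one_div_factorial

lemma choose_cast_pos (p a : ℕ) : (0:ℝ) < ((a+p).choose p : ℝ) := by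
  exact_mod_cast Nat.choose_pos (Nat.le_add_left p a)

lemma summable_master (p : ℕ) (h : ℕ → ℝ) (hh : Summable fun k => |h k| / (k.factorial : ℝ)) :
    Summable (fun km : ℕ × ℕ =>
      |h km.1 / (km.1.factorial : ℝ) *
        ((-1:ℝ)^km.2 / ((km.2.factorial : ℝ) * (((km.2+km.1+p).choose p : ℕ) : ℝ)))|) := by
  have hprod := hh.mul_of_nonneg summable_one_div_factorial
    (fun k => div_nonneg (abs_nonneg _) (Nat.cast_nonneg _))
    (fun m => div_nonneg zero_le_one (Nat.cast_nonneg _))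
  refine Summable.of_nonneg_of_le (fun _ => abs_nonneg _) (fun km => ?_) hprod
  obtain ⟨k, m⟩ := km
  have hkf : (0:ℝ) < k.factorial := by exact_mod_cast k.factorial_pos
  have hmf : (0:ℝ) < m.factorial := by exact_mod_cast m.factorial_pos
  have hC : (1:ℝ) ≤ ((m+k+p).choose p : ℝ) := by
    exact_mod_cast Nat.succ_le_of_lt (Nat.choose_pos (Nat.le_add_left p (m+k)))
  have hC0 : (0:ℝ) < ((m+k+p).choose p : ℝ) := lt_of_lt_of_le zero_lt_one hC
  rw [abs_mul, abs_div, abs_div, abs_pow, abs_neg, abs_one, one_pow,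
    Nat.abs_cast, abs_mul, Nat.abs_cast, Nat.abs_cast]
  apply mul_le_mul_of_nonneg_left _ (div_nonneg (abs_nonneg _) (Nat.cast_nonneg _))
  rw [div_le_div_iff₀ (by positivity) hmf, one_mul]
  nlinarith [hmf.le, hC]


lemma alt_sum_inv_factorials (s : ℕ) :
    ∑ i ∈ Finset.range (s+1), (-1:ℝ)^(s-i) / ((i.factorial : ℝ) * ((s-i).factorial : ℝ))
      = if s = 0 then 1 else 0 := by
  have hre : ∑ i ∈ Finset.range (s+1), (-1:ℝ)^(s-i) / ((i.factorial : ℝ) * ((s-i).factorial : ℝ))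
      = ∑ i ∈ Finset.range (s+1), (-1:ℝ)^i / ((i.factorial : ℝ) * ((s-i).factorial : ℝ)) := by
    rw [← Finset.sum_range_reflect (fun i => (-1:ℝ)^i / ((i.factorial : ℝ) * ((s-i).factorial : ℝ))) (s+1)]
    apply Finset.sum_congr rfl
    intro i hi
    rw [Finset.mem_range, Nat.lt_succ_iff] at hi
    have h1 : s + 1 - 1 - i = s - i := by omega
    have h2 : s - (s - i) = i := by omega
    rw [h1, h2, mul_comm]
  rw [hre]
  have hterm : ∀ i ∈ Finset.range (s+1),
      (-1:ℝ)^i / ((i.factorial : ℝ) * ((s-i).factorial : ℝ))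
        = ((-1:ℝ)^i * (s.choose i : ℝ)) / (s.factorial : ℝ) := by
    intro i hi
    rw [Finset.mem_range, Nat.lt_succ_iff] at hi
    have h3 := Nat.choose_mul_factorial_mul_factorial hi
    have h4 : ((s.choose i : ℕ) : ℝ) * (i.factorial : ℝ) * ((s-i).factorial : ℝ)
        = (s.factorial : ℝ) := by exact_mod_cast congrArg (Nat.cast (R := ℝ)) h3
    have hif : (0:ℝ) < i.factorial := by exact_mod_cast i.factorial_pos
    have hsif : (0:ℝ) < (s-i).factorial := by exact_mod_cast (s-i).factorial_pos
    have hsf : (0:ℝ) < s.factorial := by exact_mod_cast s.factorial_pos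
    field_simp
    rw [← h4]; ring
  rw [Finset.sum_congr rfl hterm, ← Finset.sum_div]
  have hint : ∑ i ∈ Finset.range (s+1), ((-1:ℝ)^i * (s.choose i : ℝ))
      = if s = 0 then 1 else 0 := by
    rcases eq_or_ne s 0 with hs | hs
    · subst hs; simp
    · rw [if_neg hs]
      have h5 := Int.alternating_sum_range_choose_of_ne hs
      exact_mod_cast h5
  rw [hint]
  have hsf : (0:ℝ) < s.factorial := by exact_mod_cast s.factorial_pos
  split <;> simp_all

set_option maxHeartbeats 1000000 in
lemma core_tsum (p j : ℕ) :
    ∑' km : ℕ × ℕ,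
        ((km.1.descFactorial j : ℕ) : ℝ) / (km.1.factorial : ℝ) *
          ((-1:ℝ)^km.2 / ((km.2.factorial : ℝ) * (((km.2+km.1+p).choose p : ℕ) : ℝ)))
      = 1 / (((p+j).choose j : ℕ) : ℝ) := by
  set φ : ℕ × ℕ → ℝ := fun km =>
      ((km.1.descFactorial j : ℕ) : ℝ) / (km.1.factorial : ℝ) *
        ((-1:ℝ)^km.2 / ((km.2.factorial : ℝ) * (((km.2+km.1+p).choose p : ℕ) : ℝ))) with hφ
  have hφsum : Summable φ := by
    apply Summable.of_abs
    exact summable_master p (fun k => ((k.descFactorial j : ℕ) : ℝ))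
      (by simpa [abs_of_nonneg, Nat.abs_cast] using summable_descFactorial_div_factorial j)
  -- injection (i, m) ↦ (i + j, m)
  set e : ℕ × ℕ → ℕ × ℕ := fun im => (im.1 + j, im.2) with he
  have hinj : Function.Injective e := by
    intro a b hab
    simp only [he, Prod.mk.injEq] at hab
    exact Prod.ext (by omega) hab.2
  have hsupp : Function.support φ ⊆ Set.range e := by
    intro km hkm
    by_contra hr
    apply hkm
    have hlt : km.1 < j := by
      by_contra hge
      exact hr ⟨(km.1 - j, km.2), by simp [he, Nat.sub_add_cancel (not_lt.mp hge)]⟩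
    simp [hφ, Nat.descFactorial_eq_zero_iff_lt.mpr hlt]
  rw [← hinj.tsum_eq hsupp]
  -- now: ∑' im, φ (e im)
  have hcomp : ∀ im : ℕ × ℕ, φ (e im)
      = (1 / (im.1.factorial : ℝ)) *
          ((-1:ℝ)^im.2 / ((im.2.factorial : ℝ) * (((im.2+im.1+(j+p)).choose p : ℕ) : ℝ))) := by
    intro im
    simp only [hφ, he]
    rw [descFactorial_div_factorial_eq j (im.1 + j), if_pos (Nat.le_add_left j im.1),
      Nat.add_sub_cancel]
    rw [show im.2 + (im.1 + j) + p = im.2 + im.1 + (j + p) from by omega]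
  rw [tsum_congr hcomp]
  -- sigma over antidiagonals
  set ψ : ℕ × ℕ → ℝ := fun im =>
      (1 / (im.1.factorial : ℝ)) *
        ((-1:ℝ)^im.2 / ((im.2.factorial : ℝ) * (((im.2+im.1+(j+p)).choose p : ℕ) : ℝ))) with hψ
  have hψsum : Summable ψ := by
    have : ψ = φ ∘ e := by funext im; rw [Function.comp_apply, hcomp im]
    rw [this]
    exact hφsum.comp_injective hinj
  rw [← Finset.HasAntidiagonal.sigmaAntidiagonalEquivProd.tsum_eq ψ]
  rw [Summable.tsum_sigma' (f := fun c => ψ (Finset.HasAntidiagonal.sigmaAntidiagonalEquivProd c))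
    (fun s => (hasSum_fintype _).summable)
    (Finset.HasAntidiagonal.sigmaAntidiagonalEquivProd.summable_iff.mpr hψsum)]
  have hfiber : ∀ s : ℕ,
      (∑' d : {x // x ∈ Finset.HasAntidiagonal.antidiagonal s}, ψ (Finset.HasAntidiagonal.sigmaAntidiagonalEquivProd ⟨s, d⟩))
        = if s = 0 then (1 / (((j+p).choose p : ℕ) : ℝ)) else 0 := by
    intro s
    have h1 : (∑' d : {x // x ∈ Finset.HasAntidiagonal.antidiagonal s}, ψ (Finset.HasAntidiagonal.sigmaAntidiagonalEquivProd ⟨s, d⟩))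
        = ∑ d ∈ Finset.HasAntidiagonal.antidiagonal s, ψ d := by
      rw [← Finset.tsum_subtype]
      rfl
    rw [h1, Finset.Nat.sum_antidiagonal_eq_sum_range_succ_mk]
    have h2 : ∀ i ∈ Finset.range (s+1),
        ψ (i, s - i) = ((-1:ℝ)^(s-i) / ((i.factorial : ℝ) * ((s-i).factorial : ℝ))) *
          (1 / (((s+(j+p)).choose p : ℕ) : ℝ)) := by
      intro i hi
      rw [Finset.mem_range, Nat.lt_succ_iff] at hi
      simp only [hψ]
      rw [show s - i + i = s from by omega]
      ring
    rw [Finset.sum_congr rfl h2, ← Finset.sum_mul, alt_sum_inv_factorials]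
    split
    · rename_i hs
      subst hs
      simp
    · simp
  rw [tsum_congr hfiber, tsum_eq_single 0 (fun s hs => by rw [if_neg hs])]
  rw [if_pos rfl]
  congr 2
  rw [add_comm j p, Nat.choose_symm_add]

theorem dobinski_like_modified_Bell
    (l x : ℝ) (n p : ℕ)
    (S2 : ℕ → ℕ → ℝ)
    (hS : ∀ (y : ℝ) (m : ℕ),
      degFall l y m = ∑ k ∈ Finset.range (m + 1), S2 m k * fall y k) :
    Summable (fun km : ℕ × ℕ =>
      |degFall l (x + km.1) n / (km.1.factorial : ℝ) *
        ((-1 : ℝ) ^ km.2 / ((km.2.factorial : ℝ) *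
          (((km.2 + km.1 + p).choose p : ℕ) : ℝ)))|) ∧
    (∑' km : ℕ × ℕ,
        degFall l (x + km.1) n / (km.1.factorial : ℝ) *
          ((-1 : ℝ) ^ km.2 / ((km.2.factorial : ℝ) *
            (((km.2 + km.1 + p).choose p : ℕ) : ℝ))))
      = ∑ m ∈ Finset.range (n + 1), ∑ k ∈ Finset.range (m + 1),
          ((n.choose m : ℕ) : ℝ) / (((p + k).choose k : ℕ) : ℝ) *
            S2 m k * degFall l x (n - m) := by
  constructor
  · exact summable_master p (fun k => degFall l (x + k) n)
      (summable_degFall_div_factorial l x n)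
  · have hk : ∀ k : ℕ, degFall l (x + k) n
        = ∑ m' ∈ Finset.range (n+1), ∑ jj ∈ Finset.range (m'+1),
          ((n.choose m' : ℝ) * S2 m' jj * degFall l x (n-m')) * ((k.descFactorial jj : ℕ):ℝ) := by
      intro k
      rw [degFall_add]
      apply Finset.sum_congr rfl
      intro m' _
      rw [hS (k:ℝ) m', Finset.mul_sum]
      apply Finset.sum_congr rfl
      intro jj _
      rw [fall_cast]
      ring
    have hF : ∀ km : ℕ × ℕ,
        degFall l (x + km.1) n / (km.1.factorial : ℝ) *
          ((-1 : ℝ) ^ km.2 / ((km.2.factorial : ℝ) *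
            (((km.2 + km.1 + p).choose p : ℕ) : ℝ)))
        = ∑ m' ∈ Finset.range (n+1), ∑ jj ∈ Finset.range (m'+1),
            ((n.choose m' : ℝ) * S2 m' jj * degFall l x (n-m')) *
              (((km.1.descFactorial jj : ℕ):ℝ) / (km.1.factorial : ℝ) *
                ((-1 : ℝ) ^ km.2 / ((km.2.factorial : ℝ) *
                  (((km.2 + km.1 + p).choose p : ℕ) : ℝ)))) := by
      intro km
      rw [hk km.1, Finset.sum_div, Finset.sum_mul]
      apply Finset.sum_congr rfl
      intro m' _
      rw [Finset.sum_div, Finset.sum_mul]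
      apply Finset.sum_congr rfl
      intro jj _
      ring
    have hpiece : ∀ jj : ℕ, Summable (fun km : ℕ × ℕ =>
        ((km.1.descFactorial jj : ℕ):ℝ) / (km.1.factorial : ℝ) *
          ((-1 : ℝ) ^ km.2 / ((km.2.factorial : ℝ) *
            (((km.2 + km.1 + p).choose p : ℕ) : ℝ)))) := by
      intro jj
      apply Summable.of_abs
      exact summable_master p (fun k => ((k.descFactorial jj : ℕ) : ℝ))
        (by simpa [abs_of_nonneg, Nat.abs_cast] using summable_descFactorial_div_factorial jj)
    rw [tsum_congr hF]
    rw [Summable.tsum_finsetSum (fun m' _ => summable_sum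
      (fun jj _ => (hpiece jj).mul_left _))]
    apply Finset.sum_congr rfl
    intro m' _
    rw [Summable.tsum_finsetSum (fun jj _ => (hpiece jj).mul_left _)]
    apply Finset.sum_congr rfl
    intro jj _
    rw [tsum_mul_left, core_tsum p jj]
    ring
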